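/- Let ν be a Borel probability measure on the Riemann sphere ℂ_∞ = ℂ ∪ {∞} which is nonatomic and satisfies the self-similarity relation ν = Σ_{i∈Λ} pᵢ · φᵢν for a finite family of Möbius transformations (φᵢ)_{i∈Λ} and a positive probability vector (pᵢ). Let s := sup{ν(C) : C a generalized circle} and Q := {C generalized circle : ν(C) = s}. If s > 0, then Q is a nonempty finite set, and for every C ∈ Q and every i ∈ Λ, φᵢ⁻¹(C) ∈ Q. In particular, if no finite nonempty set Q of generalized circles satisfies φᵢ(C) ∈ Q for all i ∈ Λ, C ∈ Q, then ν(C) = 0 for every generalized circle C. -/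

import Mathlib

open MeasureTheory OnePoint
open scoped ENNReal BigOperators

noncomputable section

instance : MeasurableSpace (OnePoint ℂ) := borel _
instance : BorelSpace (OnePoint ℂ) := ⟨rfl⟩

/-- The Möbius transformation of ℂ ∪ {∞} induced by a matrix g = [[a,b],[c,d]]. -/
def moeb (g : Matrix (Fin 2) (Fin 2) ℂ) (z : OnePoint ℂ) : OnePoint ℂ :=
  Option.casesOn z
    (if g 1 0 = 0 then ∞ else ((g 0 0 / g 1 0 : ℂ) : OnePoint ℂ))
    (fun w => if g 1 0 * w + g 1 1 = 0 then ∞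
      else (((g 0 0 * w + g 0 1) / (g 1 0 * w + g 1 1) : ℂ) : OnePoint ℂ))

/-- A generalized circle in ℂ ∪ {∞}: either a Euclidean circle, or a line together
with the point at infinity. -/
def IsGenCircle (C : Set (OnePoint ℂ)) : Prop :=
  (∃ (z₀ : ℂ) (r : ℝ), 0 < r ∧
    C = (fun z : ℂ => (z : OnePoint ℂ)) '' {z : ℂ | ‖z - z₀‖ = r}) ∨
  (∃ z₀ z₁ : ℂ, z₁ ≠ 0 ∧
    C = (fun z : ℂ => (z : OnePoint ℂ)) '' {z : ℂ | ∃ t : ℝ, z = z₀ + t * z₁} ∪ {OnePoint.infty})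

namespace GenAux

lemma measurableEmbedding_coe : MeasurableEmbedding (fun z : ℂ => (z : OnePoint ℂ)) :=
  OnePoint.isOpenEmbedding_coe.measurableEmbedding

lemma measurableSet_infty : MeasurableSet ({OnePoint.infty} : Set (OnePoint ℂ)) :=
  isClosed_singleton.measurableSet

lemma lineSet_eq (z₀ : ℂ) {z₁ : ℂ} (h : z₁ ≠ 0) :
    {z : ℂ | ∃ t : ℝ, z = z₀ + t * z₁} = {z : ℂ | ((z - z₀) / z₁).im = 0} := by
  ext z
  constructor
  · rintro ⟨t, rfl⟩
    simp only [Set.mem_setOf_eq, add_sub_cancel_left]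
    rw [mul_div_assoc, div_self h, mul_one]
    simp
  · intro hz
    refine ⟨((z - z₀) / z₁).re, ?_⟩
    have h1 : (((((z - z₀) / z₁).re : ℝ)) : ℂ) = (z - z₀) / z₁ := by
      apply Complex.ext <;> simp [hz.symm]
    have := congrArg (fun w : ℂ => z₀ + w * z₁) h1
    simpa [div_mul_cancel₀ _ h] using this.symm

lemma measurableSet_genCircle {C : Set (OnePoint ℂ)} (h : IsGenCircle C) : MeasurableSet C := by
  rcases h with ⟨z₀, r, _, rfl⟩ | ⟨z₀, z₁, h₁, rfl⟩
  · exact measurableEmbedding_coe.measurableSet_image.2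
      ((isClosed_eq (continuous_norm.comp (by continuity)) continuous_const).measurableSet)
  · refine MeasurableSet.union (measurableEmbedding_coe.measurableSet_image.2 ?_) measurableSet_infty
    rw [lineSet_eq z₀ h₁]
    exact (isClosed_eq (Complex.continuous_im.comp (by continuity)) continuous_const).measurableSet

end GenAux

namespace GenAux

/-- The finite part of the generalized circle with equation α|z|² + 2Re(βz) + γ = 0. -/
def ES (α : ℝ) (β : ℂ) (γ : ℝ) : Set ℂ :=
  {w : ℂ | α * Complex.normSq w + 2 * (β * w).re + γ = 0}

/-- The generalized circle with equation α|z|² + 2Re(βz) + γ = 0 (contains ∞ iff α = 0). -/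
def EC (α : ℝ) (β : ℂ) (γ : ℝ) : Set (OnePoint ℂ) :=
  (fun z : ℂ => (z : OnePoint ℂ)) '' ES α β γ ∪ (if α = 0 then {OnePoint.infty} else ∅)

lemma mem_ES {α : ℝ} {β : ℂ} {γ : ℝ} {w : ℂ} :
    w ∈ ES α β γ ↔ α * Complex.normSq w + 2 * (β * w).re + γ = 0 := Iff.rfl

lemma re_zero_param {β w : ℂ} (hβ : β ≠ 0) (h : (β * w).re = 0) :
    ∃ t : ℝ, w = t * (Complex.I * (starRingEnd ℂ) β) := by
  have hβ' : Complex.normSq β ≠ 0 := by simpa using hβ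
  refine ⟨(β * w).im / Complex.normSq β, ?_⟩
  apply mul_left_cancel₀ hβ
  have h1 : β * w = ((β * w).im : ℝ) * Complex.I := by
    apply Complex.ext <;> simp [h]
  have h2 : β * (((β * w).im / Complex.normSq β : ℝ) * (Complex.I * (starRingEnd ℂ) β))
      = (((β * w).im : ℝ) : ℂ) * Complex.I := by
    have h3 : β * (((β * w).im / Complex.normSq β : ℝ) * (Complex.I * (starRingEnd ℂ) β))
        = (((β * w).im / Complex.normSq β : ℝ)) * Complex.I * (β * (starRingEnd ℂ) β) := by ring
    rw [h3, Complex.mul_conj]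
    have hc : ((Complex.normSq β : ℂ)) ≠ 0 := by exact_mod_cast hβ'
    push_cast
    field_simp
  rw [h2]
  exact h1

/-- A circle is an E-set. -/
lemma circle_eq_ES (z₀ : ℂ) {r : ℝ} (hr : 0 < r) :
    {z : ℂ | ‖z - z₀‖ = r}
      = ES 1 (-(starRingEnd ℂ) z₀) (Complex.normSq z₀ - r ^ 2) := by
  ext z
  have key : 1 * Complex.normSq z + 2 * ((-(starRingEnd ℂ) z₀) * z).re
      + (Complex.normSq z₀ - r ^ 2) = Complex.normSq (z - z₀) - r ^ 2 := by
    simp [Complex.normSq_apply, Complex.mul_re]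
    ring
  simp only [Set.mem_setOf_eq, mem_ES, key, sub_eq_zero]
  constructor
  · intro h
    rw [← Complex.sq_norm, h]
  · intro h
    have h2 : Real.sqrt (Complex.normSq (z - z₀)) = Real.sqrt (r ^ 2) := congrArg Real.sqrt h
    rwa [Real.sqrt_sq hr.le, ← Complex.norm_def] at h2

/-- A line is an E-set. -/
lemma line_eq_ES (z₀ : ℂ) {z₁ : ℂ} (h₁ : z₁ ≠ 0) :
    {z : ℂ | ∃ t : ℝ, z = z₀ + t * z₁}
      = ES 0 (Complex.I * (starRingEnd ℂ) z₁) (-(2 * ((Complex.I * (starRingEnd ℂ) z₁) * z₀).re)) := by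
  set β := Complex.I * (starRingEnd ℂ) z₁ with hβdef
  have hβ : β ≠ 0 := by
    simp [hβdef, Complex.I_ne_zero, h₁]
  have hre : (β * z₁).re = 0 := by
    have : β * z₁ = Complex.I * ((starRingEnd ℂ) z₁ * z₁) := by ring
    rw [this, mul_comm ((starRingEnd ℂ) z₁) z₁, Complex.mul_conj]
    simp
  ext z
  simp only [Set.mem_setOf_eq, mem_ES]
  constructor
  · rintro ⟨t, rfl⟩
    have h4 : β * (z₀ + ↑t * z₁) = β * z₀ + ↑t * (β * z₁) := by ring
    rw [h4, Complex.add_re, Complex.re_ofReal_mul, hre]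
    ring
  · intro hz
    have h0 : (β * (z - z₀)).re = 0 := by
      have : β * (z - z₀) = β * z - β * z₀ := by ring
      rw [this, Complex.sub_re]
      nlinarith [hz]
    obtain ⟨t, ht⟩ := re_zero_param hβ h0
    refine ⟨t, ?_⟩
    have hIβ : Complex.I * (starRingEnd ℂ) β = z₁ := by
      rw [hβdef, map_mul, Complex.conj_I, Complex.conj_conj]
      have h5 : Complex.I * (-Complex.I * z₁) = -(Complex.I * Complex.I) * z₁ := by ring
      rw [h5, Complex.I_mul_I]
      ring
    rw [hIβ] at ht
    linear_combination ht

lemma normSq_cast_ne_zero {β : ℂ} (hβ : β ≠ 0) : Complex.normSq β ≠ 0 := by simpa using hβ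

/-- ES with α ≠ 0 is a circle. -/
lemma ES_eq_circle {α γ : ℝ} {β : ℂ} (hα : α ≠ 0) (hD : α * γ < Complex.normSq β) :
    ∃ (z₀ : ℂ) (r : ℝ), 0 < r ∧ ES α β γ = {z : ℂ | ‖z - z₀‖ = r} := by
  set D : ℝ := Complex.normSq β - α * γ with hDdef
  have hDpos : 0 < D := by simp [hDdef]; linarith
  set c : ℂ := ((-(β.re) / α : ℝ) : ℂ) + ((β.im / α : ℝ) : ℂ) * Complex.I with hcdef
  set R : ℝ := Real.sqrt D / |α| with hRdef
  have hα2 : (0:ℝ) < α ^ 2 := by positivity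
  have hRpos : 0 < R := by
    apply div_pos (Real.sqrt_pos.2 hDpos) (abs_pos.2 hα)
  refine ⟨c, R, hRpos, ?_⟩
  have key : ∀ z : ℂ, α ^ 2 * Complex.normSq (z - c) - D
      = α * (α * Complex.normSq z + 2 * (β * z).re + γ) := by
    intro z
    have hcre : c.re = -(β.re) / α := by simp [hcdef]
    have hcim : c.im = β.im / α := by simp [hcdef]
    simp only [Complex.normSq_apply, Complex.sub_re, Complex.sub_im, Complex.mul_re,
      hcre, hcim, hDdef]
    field_simp
    ring
  ext z
  simp only [mem_ES, Set.mem_setOf_eq]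
  constructor
  · intro h
    have h1 : α ^ 2 * Complex.normSq (z - c) = D := by
      have := key z
      rw [h] at this
      linarith [this]
    have h2 : Complex.normSq (z - c) = D / α ^ 2 := by
      field_simp at h1 ⊢
      linarith
    rw [Complex.norm_def, h2, Real.sqrt_div hDpos.le, Real.sqrt_sq_eq_abs, hRdef]
  · intro h
    have h2 : Complex.normSq (z - c) = D / α ^ 2 := by
      have : Complex.normSq (z - c) = R ^ 2 := by
        rw [← Complex.sq_norm, h]
      rw [this, hRdef, div_pow, Real.sq_sqrt hDpos.le, sq_abs]
    have h1 : α * (α * Complex.normSq z + 2 * (β * z).re + γ) = 0 := by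
      rw [← key z, h2]
      field_simp
      ring
    rcases mul_eq_zero.1 h1 with h | h
    · exact absurd h hα
    · exact h

/-- ES with α = 0 is a line. -/
lemma ES_eq_line {γ : ℝ} {β : ℂ} (hβ : β ≠ 0) :
    ∃ z₀ z₁ : ℂ, z₁ ≠ 0 ∧ ES 0 β γ = {z : ℂ | ∃ t : ℝ, z = z₀ + t * z₁} := by
  have hnβ : Complex.normSq β ≠ 0 := normSq_cast_ne_zero hβ
  set z₀ : ℂ := ((-(γ / (2 * Complex.normSq β)) : ℝ) : ℂ) * (starRingEnd ℂ) β with hz₀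
  set z₁ : ℂ := Complex.I * (starRingEnd ℂ) β with hz₁
  have hz₁ne : z₁ ≠ 0 := by
    simp [hz₁, Complex.I_ne_zero, hβ]
  have hre0 : (β * z₀).re = -(γ / 2) := by
    have : β * z₀ = ((-(γ / (2 * Complex.normSq β)) : ℝ) : ℂ) * (β * (starRingEnd ℂ) β) := by
      rw [hz₀]; ring
    rw [this, Complex.mul_conj, ← Complex.ofReal_mul, Complex.ofReal_re]
    field_simp
  have hre1 : (β * z₁).re = 0 := by
    have : β * z₁ = Complex.I * (β * (starRingEnd ℂ) β) := by rw [hz₁]; ring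
    rw [this, Complex.mul_conj]
    simp
  refine ⟨z₀, z₁, hz₁ne, ?_⟩
  ext z
  simp only [mem_ES, Set.mem_setOf_eq]
  constructor
  · intro hz
    have h0 : (β * (z - z₀)).re = 0 := by
      have hsub : β * (z - z₀) = β * z - β * z₀ := by ring
      rw [hsub, Complex.sub_re, hre0]
      nlinarith [hz]
    obtain ⟨t, ht⟩ := re_zero_param hβ h0
    exact ⟨t, by rw [← hz₁] at ht; linear_combination ht⟩
  · rintro ⟨t, rfl⟩
    have h4 : β * (z₀ + ↑t * z₁) = β * z₀ + ↑t * (β * z₁) := by ring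
    rw [h4, Complex.add_re, Complex.re_ofReal_mul, hre0, hre1]
    ring

/-- The main characterization: generalized circles are exactly the nondegenerate E-sets. -/
lemma isGenCircle_iff {C : Set (OnePoint ℂ)} :
    IsGenCircle C ↔ ∃ (α γ : ℝ) (β : ℂ), α * γ < Complex.normSq β ∧ C = EC α β γ := by
  constructor
  · rintro (⟨z₀, r, hr, rfl⟩ | ⟨z₀, z₁, h₁, rfl⟩)
    · refine ⟨1, Complex.normSq z₀ - r ^ 2, -(starRingEnd ℂ) z₀, ?_, ?_⟩
      · rw [Complex.normSq_neg, Complex.normSq_conj]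
        nlinarith [hr]
      · rw [EC, ← circle_eq_ES z₀ hr, if_neg one_ne_zero, Set.union_empty]
    · refine ⟨0, -(2 * ((Complex.I * (starRingEnd ℂ) z₁) * z₀).re),
        Complex.I * (starRingEnd ℂ) z₁, ?_, ?_⟩
      · rw [zero_mul]
        apply Complex.normSq_pos.2
        simp [Complex.I_ne_zero, h₁]
      · rw [EC, ← line_eq_ES z₀ h₁, if_pos rfl]
  · rintro ⟨α, γ, β, hD, rfl⟩
    by_cases hα : α = 0
    · subst hα
      have hβ : β ≠ 0 := by
        intro h
        rw [h] at hD
        simp at hD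
      obtain ⟨z₀, z₁, hz₁, hES⟩ := ES_eq_line (γ := γ) hβ
      right
      exact ⟨z₀, z₁, hz₁, by rw [EC, hES, if_pos rfl]⟩
    · obtain ⟨z₀, r, hr, hES⟩ := ES_eq_circle hα hD
      left
      exact ⟨z₀, r, hr, by rw [EC, hES, if_neg hα, Set.union_empty]⟩

end GenAux

namespace GenAux

/-- Inversion z ↦ 1/z on the Riemann sphere. -/
def inv0 : OnePoint ℂ → OnePoint ℂ :=
  fun z => Option.casesOn z ((0 : ℂ) : OnePoint ℂ)
    fun w => if w = 0 then ∞ else ((w⁻¹ : ℂ) : OnePoint ℂ)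

@[simp] lemma inv0_infty : inv0 ∞ = ((0 : ℂ) : OnePoint ℂ) := rfl

@[simp] lemma inv0_coe (w : ℂ) :
    inv0 (w : OnePoint ℂ) = if w = 0 then (∞ : OnePoint ℂ) else ((w⁻¹ : ℂ) : OnePoint ℂ) := rfl

lemma inv0_involutive : Function.Involutive inv0 := by
  intro z
  cases z with
  | infty =>
    rw [inv0_infty, inv0_coe, if_pos rfl]
  | coe w =>
    by_cases hw : w = 0
    · subst hw
      rw [inv0_coe, if_pos rfl, inv0_infty]
    · rw [inv0_coe, if_neg hw, inv0_coe, if_neg (inv_ne_zero hw), inv_inv]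

/-- Inversion as an equivalence. -/
def invE : OnePoint ℂ ≃ OnePoint ℂ := Function.Involutive.toPerm inv0 inv0_involutive

@[simp] lemma invE_apply (z : OnePoint ℂ) : invE z = inv0 z := rfl
@[simp] lemma invE_symm_apply (z : OnePoint ℂ) : invE.symm z = inv0 z := rfl

lemma mem_coe_image_iff {S : Set ℂ} {w : ℂ} :
    (w : OnePoint ℂ) ∈ (fun z : ℂ => (z : OnePoint ℂ)) '' S ↔ w ∈ S := by
  constructor
  · rintro ⟨v, hv, hvw⟩
    rwa [← OnePoint.coe_injective hvw]
  · intro h; exact ⟨w, h, rfl⟩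

lemma infty_not_mem_coe_image {S : Set ℂ} :
    OnePoint.infty ∉ (fun z : ℂ => (z : OnePoint ℂ)) '' S := by
  rintro ⟨v, _, hv⟩
  exact OnePoint.infty_ne_coe v hv.symm

lemma mem_EC_coe {α γ : ℝ} {β : ℂ} {w : ℂ} :
    (w : OnePoint ℂ) ∈ EC α β γ ↔ w ∈ ES α β γ := by
  rw [EC]
  constructor
  · rintro (h | h)
    · exact mem_coe_image_iff.1 h
    · split_ifs at h with h'
      · exact absurd h.symm (OnePoint.infty_ne_coe w)
      · exact absurd h (Set.notMem_empty _)
  · intro h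
    exact Or.inl (mem_coe_image_iff.2 h)

lemma mem_EC_infty {α γ : ℝ} {β : ℂ} :
    OnePoint.infty ∈ EC α β γ ↔ α = 0 := by
  rw [EC]
  constructor
  · rintro (h | h)
    · exact absurd h infty_not_mem_coe_image
    · split_ifs at h with h'
      · exact h'
      · exact absurd h (Set.notMem_empty _)
  · intro h
    rw [if_pos h]
    exact Or.inr rfl

lemma zero_mem_ES_iff {α γ : ℝ} {β : ℂ} : (0 : ℂ) ∈ ES α β γ ↔ γ = 0 := by
  simp [mem_ES]

/-- The key computation: inversion transforms E-set membership. -/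
lemma inv_mem_ES_iff {α γ : ℝ} {β : ℂ} {w : ℂ} (hw : w ≠ 0) :
    w⁻¹ ∈ ES α β γ ↔ w ∈ ES γ ((starRingEnd ℂ) β) α := by
  have hn : Complex.normSq w ≠ 0 := normSq_cast_ne_zero hw
  have key : α * Complex.normSq w⁻¹ + 2 * (β * w⁻¹).re + γ
      = (Complex.normSq w)⁻¹ *
        (γ * Complex.normSq w + 2 * (((starRingEnd ℂ) β) * w).re + α) := by
    rw [Complex.normSq_inv]
    have h1 : (β * w⁻¹).re = ((β * (starRingEnd ℂ) w).re) * (Complex.normSq w)⁻¹ := by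
      rw [Complex.inv_def]
      have e : β * ((starRingEnd ℂ) w * (((Complex.normSq w)⁻¹ : ℝ) : ℂ))
          = (((Complex.normSq w)⁻¹ : ℝ) : ℂ) * (β * (starRingEnd ℂ) w) := by ring
      rw [e, Complex.re_ofReal_mul]
      ring
    have h2 : (β * (starRingEnd ℂ) w).re = (((starRingEnd ℂ) β) * w).re := by
      simp [Complex.mul_re]
    rw [h1, h2]
    field_simp
    ring
  rw [mem_ES, mem_ES, key]
  constructor
  · intro h
    rcases mul_eq_zero.1 h with h' | h'
    · exact absurd h' (inv_ne_zero hn)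
    · exact h'
  · intro h
    rw [h, mul_zero]

lemma inv0_image_EC (α γ : ℝ) (β : ℂ) :
    inv0 '' EC α β γ = EC γ ((starRingEnd ℂ) β) α := by
  have himg : ∀ z, z ∈ inv0 '' EC α β γ ↔ inv0 z ∈ EC α β γ := by
    intro z
    constructor
    · rintro ⟨w, hw, rfl⟩
      rwa [inv0_involutive w]
    · intro h
      exact ⟨inv0 z, h, inv0_involutive z⟩
  ext z
  rw [himg]
  cases z with
  | infty =>
    rw [inv0_infty, mem_EC_coe, mem_EC_infty, zero_mem_ES_iff]
  | coe w =>
    by_cases hw : w = 0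
    · subst hw
      rw [inv0_coe, if_pos rfl, mem_EC_infty, mem_EC_coe, zero_mem_ES_iff]
    · rw [inv0_coe, if_neg hw, mem_EC_coe, mem_EC_coe, inv_mem_ES_iff hw]

/-- Inversion maps generalized circles to generalized circles. -/
lemma isGenCircle_inv0_image {C : Set (OnePoint ℂ)} (h : IsGenCircle C) :
    IsGenCircle (inv0 '' C) := by
  obtain ⟨α, γ, β, hD, rfl⟩ := isGenCircle_iff.1 h
  rw [inv0_image_EC]
  exact isGenCircle_iff.2 ⟨γ, α, (starRingEnd ℂ) β, by
    rwa [Complex.normSq_conj, mul_comm], rfl⟩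

end GenAux

namespace GenAux

/-- The affine map z ↦ αz + β on ℂ. -/
def affC (α β : ℂ) : ℂ → ℂ := fun z => α * z + β

/-- The affine map on the Riemann sphere as an equivalence (α ≠ 0). -/
def affE (α β : ℂ) (hα : α ≠ 0) : OnePoint ℂ ≃ OnePoint ℂ where
  toFun := OnePoint.map (affC α β)
  invFun := OnePoint.map (affC α⁻¹ (-β / α))
  left_inv := by
    intro z
    cases z with
    | infty => rfl
    | coe w =>
      show ((α⁻¹ * (α * w + β) + -β / α : ℂ) : OnePoint ℂ) = (w : OnePoint ℂ)
      congr 1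
      field_simp
      ring
  right_inv := by
    intro z
    cases z with
    | infty => rfl
    | coe w =>
      show ((α * (α⁻¹ * w + -β / α) + β : ℂ) : OnePoint ℂ) = (w : OnePoint ℂ)
      congr 1
      field_simp
      ring

@[simp] lemma affE_apply (α β : ℂ) (hα : α ≠ 0) (z : OnePoint ℂ) :
    affE α β hα z = OnePoint.map (affC α β) z := rfl

@[simp] lemma affE_symm_apply (α β : ℂ) (hα : α ≠ 0) (z : OnePoint ℂ) :
    (affE α β hα).symm z = OnePoint.map (affC α⁻¹ (-β / α)) z := rfl

lemma affC_image_circle (α β : ℂ) (hα : α ≠ 0) (z₀ : ℂ) (r : ℝ) (hr : 0 < r) :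
    affC α β '' {z : ℂ | ‖z - z₀‖ = r}
      = {z : ℂ | ‖z - (α * z₀ + β)‖ = ‖α‖ * r} := by
  ext z
  constructor
  · rintro ⟨w, hw, rfl⟩
    have : affC α β w - (α * z₀ + β) = α * (w - z₀) := by rw [affC]; ring
    simp only [Set.mem_setOf_eq, this, norm_mul]
    rw [Set.mem_setOf_eq.mp hw]
  · intro hz
    refine ⟨(z - β) / α, ?_, ?_⟩
    · have : (z - β) / α - z₀ = (z - (α * z₀ + β)) / α := by field_simp; ring
      rw [Set.mem_setOf_eq, this, norm_div, Set.mem_setOf_eq.mp hz]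
      field_simp [norm_ne_zero_iff.mpr hα]
    · rw [affC]
      field_simp
      ring

lemma affC_image_line (α β : ℂ) (z₀ z₁ : ℂ) :
    affC α β '' {z : ℂ | ∃ t : ℝ, z = z₀ + t * z₁}
      = {z : ℂ | ∃ t : ℝ, z = (α * z₀ + β) + t * (α * z₁)} := by
  ext z
  constructor
  · rintro ⟨w, ⟨t, rfl⟩, rfl⟩
    exact ⟨t, by rw [affC]; ring⟩
  · rintro ⟨t, rfl⟩
    exact ⟨z₀ + t * z₁, ⟨t, rfl⟩, by rw [affC]; ring⟩

lemma map_coe_image (f : ℂ → ℂ) (S : Set ℂ) :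
    OnePoint.map f '' ((fun z : ℂ => (z : OnePoint ℂ)) '' S)
      = (fun z : ℂ => (z : OnePoint ℂ)) '' (f '' S) := by
  rw [← Set.image_comp, ← Set.image_comp]
  rfl

lemma isGenCircle_affE_image {C : Set (OnePoint ℂ)} (α β : ℂ) (hα : α ≠ 0)
    (h : IsGenCircle C) : IsGenCircle (OnePoint.map (affC α β) '' C) := by
  rcases h with ⟨z₀, r, hr, rfl⟩ | ⟨z₀, z₁, h₁, rfl⟩
  · left
    refine ⟨α * z₀ + β, ‖α‖ * r, mul_pos (norm_pos_iff.mpr hα) hr, ?_⟩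
    rw [map_coe_image, affC_image_circle α β hα z₀ r hr]
  · right
    refine ⟨α * z₀ + β, α * z₁, mul_ne_zero hα h₁, ?_⟩
    rw [Set.image_union, map_coe_image, affC_image_line α β z₀ z₁,
      Set.image_singleton]
    rfl

lemma isGenCircle_inv0_image' {C : Set (OnePoint ℂ)} (h : IsGenCircle C) :
    IsGenCircle (invE '' C) := isGenCircle_inv0_image h

end GenAux

namespace GenAux

lemma image_trans (e₁ e₂ : OnePoint ℂ ≃ OnePoint ℂ) (C : Set (OnePoint ℂ)) :
    (e₁.trans e₂) '' C = e₂ '' (e₁ '' C) := by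
  rw [← Set.image_comp]; rfl

lemma image_trans_symm (e₁ e₂ : OnePoint ℂ ≃ OnePoint ℂ) (C : Set (OnePoint ℂ)) :
    (e₁.trans e₂).symm '' C = e₁.symm '' (e₂.symm '' C) := by
  rw [← Set.image_comp]; rfl

lemma isGenCircle_affE_image' {C : Set (OnePoint ℂ)} (α β : ℂ) (hα : α ≠ 0)
    (h : IsGenCircle C) : IsGenCircle ((affE α β hα) '' C) :=
  isGenCircle_affE_image α β hα h

lemma isGenCircle_affE_symm_image {C : Set (OnePoint ℂ)} (α β : ℂ) (hα : α ≠ 0)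
    (h : IsGenCircle C) : IsGenCircle ((affE α β hα).symm '' C) := by
  have he : ⇑(affE α β hα).symm = OnePoint.map (affC α⁻¹ (-β / α)) := rfl
  rw [he]
  exact isGenCircle_affE_image α⁻¹ (-β / α) (inv_ne_zero hα) h

lemma isGenCircle_invE_image {C : Set (OnePoint ℂ)} (h : IsGenCircle C) :
    IsGenCircle (invE '' C) := isGenCircle_inv0_image h

lemma isGenCircle_invE_symm_image {C : Set (OnePoint ℂ)} (h : IsGenCircle C) :
    IsGenCircle (invE.symm '' C) := isGenCircle_inv0_image h

/-- Every Möbius transformation coming from `SL(2,ℂ)` is realized by an equivalence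
of the Riemann sphere mapping generalized circles to generalized circles
in both directions. -/
lemma moeb_spec (g : Matrix.SpecialLinearGroup (Fin 2) ℂ) :
    ∃ e : OnePoint ℂ ≃ OnePoint ℂ, ⇑e = moeb (↑g : Matrix (Fin 2) (Fin 2) ℂ) ∧
      (∀ C : Set (OnePoint ℂ), IsGenCircle C → IsGenCircle (e '' C)) ∧
      (∀ C : Set (OnePoint ℂ), IsGenCircle C → IsGenCircle (e.symm '' C)) := by
  set M : Matrix (Fin 2) (Fin 2) ℂ := ↑g with hM
  set a := M 0 0; set b := M 0 1; set c := M 1 0; set d := M 1 1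
  have hdet : a * d - b * c = 1 := by
    have := g.property
    rwa [Matrix.det_fin_two] at this
  by_cases hc : c = 0
  · have hd : d ≠ 0 := by
      intro h
      rw [hc, h] at hdet
      simp at hdet
    refine ⟨affE (a / d) (b / d) (by
      intro h
      rw [div_eq_zero_iff] at h
      rcases h with h | h
      · rw [hc, h] at hdet; simp at hdet
      · exact hd h), ?_, ?_, ?_⟩
    · funext z
      cases z with
      | infty =>
        show OnePoint.map (affC (a / d) (b / d)) ∞ = moeb M ∞
        rw [OnePoint.map_infty]
        show _ = if c = 0 then (∞ : OnePoint ℂ) else _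
        rw [if_pos hc]
      | coe w =>
        show ((a / d * w + b / d : ℂ) : OnePoint ℂ)
          = if c * w + d = 0 then (∞ : OnePoint ℂ) else (((a * w + b) / (c * w + d) : ℂ) : OnePoint ℂ)
        rw [hc, zero_mul, zero_add, if_neg hd]
        congr 1
        field_simp
    · intro C hC; exact isGenCircle_affE_image' _ _ _ hC
    · intro C hC; exact isGenCircle_affE_symm_image _ _ _ hC
  · have hc' : -c⁻¹ ≠ 0 := by simp [hc]
    refine ⟨(affE c d hc).trans (invE.trans (affE (-c⁻¹) (a / c) hc')), ?_, ?_, ?_⟩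
    · funext z
      cases z with
      | infty =>
        simp only [Equiv.trans_apply, affE_apply, OnePoint.map_infty, invE_apply,
          inv0_infty, OnePoint.map_some, affC]
        show ((-c⁻¹ * 0 + a / c : ℂ) : OnePoint ℂ)
          = if c = 0 then (∞ : OnePoint ℂ) else ((a / c : ℂ) : OnePoint ℂ)
        rw [if_neg hc]
        congr 1
        ring
      | coe w =>
        by_cases hw : c * w + d = 0
        · simp only [Equiv.trans_apply, affE_apply, OnePoint.map_some, affC, invE_apply,
            inv0_coe, if_pos hw, OnePoint.map_infty]
          show (∞ : OnePoint ℂ) = if c * w + d = 0 then (∞ : OnePoint ℂ) else _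
          rw [if_pos hw]
        · simp only [Equiv.trans_apply, affE_apply, OnePoint.map_some, affC, invE_apply,
            inv0_coe, if_neg hw]
          show ((-c⁻¹ * (c * w + d)⁻¹ + a / c : ℂ) : OnePoint ℂ)
            = if c * w + d = 0 then (∞ : OnePoint ℂ) else (((a * w + b) / (c * w + d) : ℂ) : OnePoint ℂ)
          rw [if_neg hw]
          congr 1
          field_simp
          linear_combination hdet
    · intro C hC
      rw [image_trans, image_trans]
      exact isGenCircle_affE_image' _ _ _ (isGenCircle_invE_image (isGenCircle_affE_image' _ _ _ hC))
    · intro C hC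
      rw [image_trans_symm, image_trans_symm]
      exact isGenCircle_affE_symm_image _ _ _ (isGenCircle_invE_symm_image (isGenCircle_affE_symm_image _ _ _ hC))

end GenAux

namespace GenAux

lemma quad_roots_finite {A B C : ℝ} (hA : A ≠ 0) :
    {t : ℝ | A * t ^ 2 + B * t + C = 0}.Finite := by
  set D : ℝ := B ^ 2 - 4 * A * C with hD
  apply Set.Finite.subset
    (((Set.finite_singleton ((-B - Real.sqrt D) / (2 * A))).insert
      ((-B + Real.sqrt D) / (2 * A))))
  intro t ht
  have h2 : (2 * A * t + B) ^ 2 = D := by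
    have h0 := Set.mem_setOf_eq.mp ht
    rw [hD]
    linear_combination (4 * A) * h0
  have h3 : Real.sqrt D = |2 * A * t + B| := by
    rw [← h2, Real.sqrt_sq_eq_abs]
  have hA2 : (2 : ℝ) * A ≠ 0 := by simpa using hA
  simp only [Set.mem_insert_iff, Set.mem_singleton_iff]
  rcases abs_cases (2 * A * t + B) with ⟨hc, _⟩ | ⟨hc, _⟩
  · left
    rw [eq_div_iff hA2]
    rw [hc] at h3
    linarith
  · right
    rw [eq_div_iff hA2]
    rw [hc] at h3
    linarith

lemma circle_line_finite (c : ℂ) (r : ℝ) (z₀ : ℂ) {z₁ : ℂ} (h₁ : z₁ ≠ 0) :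
    ({z : ℂ | ‖z - c‖ = r} ∩ {z : ℂ | ∃ t : ℝ, z = z₀ + t * z₁}).Finite := by
  set A : ℝ := z₁.re ^ 2 + z₁.im ^ 2 with hA
  set B : ℝ := 2 * ((z₀.re - c.re) * z₁.re + (z₀.im - c.im) * z₁.im) with hB
  set CC : ℝ := (z₀.re - c.re) ^ 2 + (z₀.im - c.im) ^ 2 - r ^ 2 with hCC
  have hAne : A ≠ 0 := by
    have hpos := Complex.normSq_pos.2 h₁
    rw [Complex.normSq_apply] at hpos
    rw [hA]
    nlinarith [hpos]
  refine Set.Finite.subset (Set.Finite.image (fun t : ℝ => z₀ + (t : ℂ) * z₁)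
    (quad_roots_finite (A := A) (B := B) (C := CC) hAne)) ?_
  rintro z ⟨hz1, t, rfl⟩
  refine ⟨t, ?_, rfl⟩
  have e1 : Complex.normSq (z₀ + t * z₁ - c) = r ^ 2 := by
    rw [← Complex.sq_norm, Set.mem_setOf_eq.mp hz1]
  rw [Set.mem_setOf_eq, hA, hB, hCC]
  simp only [Complex.normSq_apply, Complex.add_re, Complex.add_im, Complex.sub_re,
    Complex.sub_im, Complex.mul_re, Complex.mul_im, Complex.ofReal_re, Complex.ofReal_im] at e1
  nlinarith [e1]

lemma line_line_subsingleton {z₀ z₁ w₀ w₁ : ℂ} (h₁ : z₁ ≠ 0) (h₂ : w₁ ≠ 0)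
    (hne : {z : ℂ | ∃ t : ℝ, z = z₀ + t * z₁} ≠ {z : ℂ | ∃ t : ℝ, z = w₀ + t * w₁}) :
    ({z : ℂ | ∃ t : ℝ, z = z₀ + t * z₁} ∩ {z : ℂ | ∃ t : ℝ, z = w₀ + t * w₁}).Subsingleton := by
  intro x hx y hy
  by_contra hxy
  obtain ⟨⟨tx, htx⟩, ⟨sx, hsx⟩⟩ := hx
  obtain ⟨⟨ty, hty⟩, ⟨sy, hsy⟩⟩ := hy
  have htt : tx ≠ ty := by
    rintro rfl
    exact hxy (htx.trans hty.symm)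
  have hss : sx ≠ sy := by
    rintro rfl
    exact hxy (hsx.trans hsy.symm)
  set ρ : ℝ := (tx - ty) / (sx - sy) with hρdef
  have hρ : ρ ≠ 0 := div_ne_zero (sub_ne_zero.2 htt) (sub_ne_zero.2 hss)
  have hρC : (ρ : ℂ) ≠ 0 := Complex.ofReal_ne_zero.2 hρ
  have hw : w₁ = (ρ : ℂ) * z₁ := by
    have hxy' : ((tx - ty : ℝ) : ℂ) * z₁ = ((sx - sy : ℝ) : ℂ) * w₁ := by
      push_cast
      linear_combination -htx + hty + hsx - hsy
    have hssC : ((sx - sy : ℝ) : ℂ) ≠ 0 :=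
      Complex.ofReal_ne_zero.2 (sub_ne_zero.2 hss)
    rw [hρdef, Complex.ofReal_div, div_mul_eq_mul_div, eq_div_iff hssC]
    linear_combination -hxy'
  apply hne
  ext z
  constructor
  · rintro ⟨t, rfl⟩
    refine ⟨sx + (t - tx) / ρ, ?_⟩
    have hw₀ : w₀ = x - sx * w₁ := by linear_combination -hsx
    have hz₀ : z₀ = x - tx * z₁ := by linear_combination -htx
    rw [hw₀, hz₀, hw]
    push_cast
    field_simp
    ring
  · rintro ⟨s, rfl⟩
    refine ⟨tx + (s - sx) * ρ, ?_⟩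
    have hw₀ : w₀ = x - sx * w₁ := by linear_combination -hsx
    have hz₀ : z₀ = x - tx * z₁ := by linear_combination -htx
    rw [hw₀, hz₀, hw]
    push_cast
    ring

end GenAux

namespace GenAux

lemma coe_image_inter (S T : Set ℂ) :
    ((fun z : ℂ => (z : OnePoint ℂ)) '' S) ∩ ((fun z : ℂ => (z : OnePoint ℂ)) '' T)
      = (fun z : ℂ => (z : OnePoint ℂ)) '' (S ∩ T) :=
  (Set.image_inter OnePoint.coe_injective).symm

/-- Two distinct generalized circles intersect in a countable (in fact finite) set. -/
lemma genCircle_inter_countable {C₁ C₂ : Set (OnePoint ℂ)}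
    (h₁ : IsGenCircle C₁) (h₂ : IsGenCircle C₂) (hne : C₁ ≠ C₂) :
    (C₁ ∩ C₂).Countable := by
  rcases h₁ with ⟨c₁, r₁, hr₁, rfl⟩ | ⟨z₀, z₁, hz₁, rfl⟩
  · rcases h₂ with ⟨c₂, r₂, hr₂, rfl⟩ | ⟨w₀, w₁, hw₁, rfl⟩
    · -- circle ∩ circle
      rw [coe_image_inter]
      apply Set.Countable.image
      by_cases hcc : c₁ = c₂
      · subst hcc
        have hrr : r₁ ≠ r₂ := by
          intro h
          exact hne (by rw [h])
        have : {z : ℂ | ‖z - c₁‖ = r₁} ∩ {z : ℂ | ‖z - c₁‖ = r₂} = ∅ := by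
          ext z
          simp only [Set.mem_inter_iff, Set.mem_setOf_eq, Set.mem_empty_iff_false, iff_false]
          rintro ⟨ha, hb⟩
          exact hrr (ha.symm.trans hb)
        rw [this]
        exact Set.countable_empty
      · -- radical line
        have hβ : (starRingEnd ℂ) c₂ - (starRingEnd ℂ) c₁ ≠ 0 := by
          intro h
          apply hcc
          have := sub_eq_zero.1 h
          exact (starRingEnd ℂ).injective this.symm
        obtain ⟨l₀, l₁, hl₁, hES⟩ := ES_eq_line
          (γ := (Complex.normSq c₁ - r₁ ^ 2) - (Complex.normSq c₂ - r₂ ^ 2)) hβ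
        apply Set.Countable.mono ?_ (circle_line_finite c₁ r₁ l₀ hl₁).countable
        rintro z ⟨ha, hb⟩
        refine ⟨ha, ?_⟩
        rw [← hES, mem_ES]
        have e1 : Complex.normSq (z - c₁) = r₁ ^ 2 := by
          rw [← Complex.sq_norm, Set.mem_setOf_eq.mp ha]
        have e2 : Complex.normSq (z - c₂) = r₂ ^ 2 := by
          rw [← Complex.sq_norm, Set.mem_setOf_eq.mp hb]
        simp only [Complex.normSq_apply, Complex.sub_re, Complex.sub_im] at e1 e2
        simp only [Complex.normSq_apply, Complex.mul_re, Complex.sub_re, Complex.sub_im,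
          Complex.conj_re, Complex.conj_im]
        nlinarith [e1, e2]
    · -- circle ∩ line
      rw [Set.inter_union_distrib_left]
      apply Set.Countable.union
      · rw [coe_image_inter]
        exact ((circle_line_finite c₁ r₁ w₀ hw₁).countable).image _
      · apply Set.Countable.mono (Set.inter_subset_right)
        exact Set.countable_singleton _
  · rcases h₂ with ⟨c₂, r₂, hr₂, rfl⟩ | ⟨w₀, w₁, hw₁, rfl⟩
    · -- line ∩ circle
      rw [Set.union_inter_distrib_right]
      apply Set.Countable.union
      · rw [coe_image_inter]
        apply Set.Countable.image
        apply Set.Countable.mono ?_ (circle_line_finite c₂ r₂ z₀ hz₁).countable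
        rintro z ⟨ha, hb⟩
        exact ⟨hb, ha⟩
      · apply Set.Countable.mono (Set.inter_subset_left)
        exact Set.countable_singleton _
    · -- line ∩ line
      have hLL : {z : ℂ | ∃ t : ℝ, z = z₀ + t * z₁} ≠ {z : ℂ | ∃ t : ℝ, z = w₀ + t * w₁} := by
        intro h
        exact hne (by rw [h])
      refine Set.Countable.mono ?_ (Set.Countable.union
          (((line_line_subsingleton hz₁ hw₁ hLL).countable).image
            (fun z : ℂ => (z : OnePoint ℂ)))
          (Set.countable_singleton OnePoint.infty))
      rintro z ⟨hz1 | hz1, hz2 | hz2⟩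
      · rcases hz2 with ⟨v, hv, hvz⟩
        rcases hz1 with ⟨u, hu, huz⟩
        left
        refine ⟨u, ⟨hu, ?_⟩, huz⟩
        rwa [show v = u from OnePoint.coe_injective (hvz.trans huz.symm)] at hv
      · right; exact hz2
      · right; exact hz1
      · right; exact hz1

end GenAux

namespace GenAux

lemma measurableSet_onePoint_iff {S : Set (OnePoint ℂ)} :
    MeasurableSet S ↔ MeasurableSet ((fun z : ℂ => (z : OnePoint ℂ)) ⁻¹' S) := by
  constructor
  · intro h
    exact h.preimage OnePoint.continuous_coe.measurable
  · intro h
    have hdec : S = (fun z : ℂ => (z : OnePoint ℂ)) '' ((fun z : ℂ => (z : OnePoint ℂ)) ⁻¹' S)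
        ∪ (S ∩ {OnePoint.infty}) := by
      ext z
      cases z with
      | infty =>
        constructor
        · intro h'; exact Or.inr ⟨h', rfl⟩
        · rintro (⟨u, hu, huz⟩ | ⟨h', _⟩)
          · exact absurd huz.symm (OnePoint.infty_ne_coe u)
          · exact h'
      | coe w =>
        constructor
        · intro h'; exact Or.inl ⟨w, h', rfl⟩
        · rintro (⟨u, hu, huz⟩ | ⟨h', habs⟩)
          · rwa [← OnePoint.coe_injective huz]
          · exact absurd habs.symm (OnePoint.infty_ne_coe w)
    rw [hdec]
    refine (measurableEmbedding_coe.measurableSet_image.2 h).union ?_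
    by_cases hS : OnePoint.infty ∈ S
    · have : S ∩ {OnePoint.infty} = {OnePoint.infty} := by
        ext z; simp only [Set.mem_inter_iff, Set.mem_singleton_iff]
        exact ⟨fun h' => h'.2, fun h' => ⟨h' ▸ hS, h'⟩⟩
      rw [this]; exact measurableSet_infty
    · have : S ∩ {OnePoint.infty} = ∅ := by
        ext z; simp only [Set.mem_inter_iff, Set.mem_singleton_iff,
          Set.mem_empty_iff_false, iff_false, not_and]
        rintro h' rfl; exact hS h'
      rw [this]; exact MeasurableSet.empty

lemma measurable_moeb (M : Matrix (Fin 2) (Fin 2) ℂ) : Measurable (moeb M) := by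
  intro T hT
  rw [measurableSet_onePoint_iff]
  have heq : (fun z : ℂ => (z : OnePoint ℂ)) ⁻¹' (moeb M ⁻¹' T)
      = (fun w : ℂ => if M 1 0 * w + M 1 1 = 0 then (∞ : OnePoint ℂ)
          else (((M 0 0 * w + M 0 1) / (M 1 0 * w + M 1 1) : ℂ) : OnePoint ℂ)) ⁻¹' T := rfl
  rw [heq]
  refine (Measurable.ite ?_ measurable_const
    (OnePoint.continuous_coe.measurable.comp ?_)) hT
  · exact (isClosed_eq ((continuous_const.mul continuous_id).add continuous_const)
      continuous_const).measurableSet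
  · exact ((measurable_const.mul measurable_id).add measurable_const).div
      ((measurable_const.mul measurable_id).add measurable_const)

end GenAux


open GenAux

/-- If ν is a nonatomic stationary measure on the Riemann sphere for a finite family of
Möbius transformations and the supremum s of ν-masses of generalized circles is positive,
then the set Q of generalized circles of mass s is nonempty, finite and backward invariant;
in particular, if no finite nonempty forward-invariant family of generalized circles
exists, then every generalized circle is ν-null. -/
theorem stmt_17 {Λ : Type} [Fintype Λ] [Nonempty Λ]
    (g : Λ → Matrix.SpecialLinearGroup (Fin 2) ℂ)
    (p : Λ → ℝ) (hp : ∀ i, 0 < p i) (hp1 : ∑ i, p i = 1)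
    (ν : Measure (OnePoint ℂ)) [IsProbabilityMeasure ν]
    (hna : ∀ x : OnePoint ℂ, ν {x} = 0)
    (hstat : ν = ∑ i, ENNReal.ofReal (p i) •
      Measure.map (moeb (↑(g i) : Matrix (Fin 2) (Fin 2) ℂ)) ν) :
    ∀ (s : ℝ≥0∞) (Q : Set (Set (OnePoint ℂ))),
      s = sSup {r : ℝ≥0∞ | ∃ C : Set (OnePoint ℂ), IsGenCircle C ∧ r = ν C} →
      Q = {C | IsGenCircle C ∧ ν C = s} →
      ((0 < s → Q.Nonempty ∧ Q.Finite ∧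
        ∀ C ∈ Q, ∀ i : Λ, (moeb (↑(g i) : Matrix (Fin 2) (Fin 2) ℂ)) ⁻¹' C ∈ Q) ∧
      ((¬ ∃ Q' : Set (Set (OnePoint ℂ)), Q'.Finite ∧ Q'.Nonempty ∧
          (∀ C ∈ Q', IsGenCircle C) ∧
          ∀ i : Λ, ∀ C ∈ Q', (moeb (↑(g i) : Matrix (Fin 2) (Fin 2) ℂ)) '' C ∈ Q') →
        ∀ C : Set (OnePoint ℂ), IsGenCircle C → ν C = 0)) := by

  haveI : NullSingletonClass ν := ⟨hna⟩
  intro s Q hs hQ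
  have hle1 : ∀ C : Set (OnePoint ℂ), ν C ≤ 1 :=
    fun C => (measure_mono (Set.subset_univ C)).trans_eq measure_univ
  have hsle1 : s ≤ 1 := by
    rw [hs]
    apply sSup_le
    rintro r ⟨C, _, rfl⟩
    exact hle1 C
  have hsne : s ≠ (⊤ : ℝ≥0∞) := (hsle1.trans_lt ENNReal.one_lt_top).ne
  have hdis : ∀ C₁ C₂ : Set (OnePoint ℂ), IsGenCircle C₁ → IsGenCircle C₂ → C₁ ≠ C₂ →
      ν (C₁ ∩ C₂) = 0 :=
    fun C₁ C₂ h₁ h₂ hne => (genCircle_inter_countable h₁ h₂ hne).measure_zero ν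
  have hFin : ∀ ε : ℝ≥0∞, 0 < ε → {C : Set (OnePoint ℂ) | IsGenCircle C ∧ ε ≤ ν C}.Finite := by
    intro ε hε
    have hfin := MeasureTheory.Measure.finite_const_le_meas_of_disjoint_iUnion₀ ν hε
      (ι := {C : Set (OnePoint ℂ) // IsGenCircle C}) (As := fun i => i.1)
      (fun i => (measurableSet_genCircle i.2).nullMeasurableSet)
      (fun i j hij => hdis i.1 j.1 i.2 j.2 (fun h => hij (Subtype.ext h)))
      (((hle1 _).trans_lt ENNReal.one_lt_top).ne)
    have himg : {C : Set (OnePoint ℂ) | IsGenCircle C ∧ ε ≤ ν C}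
        = Subtype.val '' {i : {C : Set (OnePoint ℂ) // IsGenCircle C} | ε ≤ ν i.1} := by
      ext C
      constructor
      · rintro ⟨h1, h2⟩; exact ⟨⟨C, h1⟩, h2, rfl⟩
      · rintro ⟨i, hi, rfl⟩; exact ⟨i.2, hi⟩
    rw [himg]
    exact hfin.image _
  -- stationarity pointwise
  have hν : ∀ D : Set (OnePoint ℂ), MeasurableSet D →
      ν D = ∑ i, ENNReal.ofReal (p i) * ν (moeb (↑(g i) : Matrix (Fin 2) (Fin 2) ℂ) ⁻¹' D) := by
    intro D hD
    conv_lhs => rw [hstat]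
    rw [Measure.finset_sum_apply]
    apply Finset.sum_congr rfl
    intro i _
    rw [Measure.smul_apply, smul_eq_mul, Measure.map_apply (measurable_moeb _) hD]
  have hmain : 0 < s → Q.Nonempty ∧ Q.Finite ∧
      ∀ C ∈ Q, ∀ i : Λ, (moeb (↑(g i) : Matrix (Fin 2) (Fin 2) ℂ)) ⁻¹' C ∈ Q := by
    intro hspos
    have hhalfpos : 0 < s / 2 := ENNReal.half_pos hspos.ne'
    have hhalf : s / 2 < s := ENNReal.half_lt_self hspos.ne' hsne
    have hhalf2 : s / 2 < sSup {r : ℝ≥0∞ | ∃ C : Set (OnePoint ℂ), IsGenCircle C ∧ r = ν C} := by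
      rw [← hs]; exact hhalf
    obtain ⟨r, hrmem, hr⟩ := lt_sSup_iff.mp hhalf2
    obtain ⟨C₀, hC₀, rfl⟩ := hrmem
    set F := {C : Set (OnePoint ℂ) | IsGenCircle C ∧ s / 2 ≤ ν C} with hF
    have hFfin : F.Finite := hFin _ hhalfpos
    have hFne : F.Nonempty := ⟨C₀, hC₀, hr.le⟩
    obtain ⟨Cm, hCmF, hmax⟩ := Set.Finite.exists_maximalFor (fun C => ν C) F hFfin hFne
    have hCm : ν Cm = s := by
      apply le_antisymm
      · rw [hs]; exact le_sSup ⟨Cm, hCmF.1, rfl⟩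
      · rw [hs]
        apply sSup_le
        rintro r ⟨C, hC, rfl⟩
        rcases le_or_gt (ν C) (s / 2) with h | h
        · exact h.trans hCmF.2
        · rcases le_or_gt (ν C) (ν Cm) with h' | h'
          · exact h'
          · exact (hmax ⟨hC, h.le⟩ h'.le)
    have hQne : Q.Nonempty := ⟨Cm, hQ ▸ ⟨hCmF.1, hCm⟩⟩
    have hQfin : Q.Finite := by
      apply hFfin.subset
      rw [hQ]
      rintro C ⟨h1, h2⟩
      exact ⟨h1, by rw [h2]; exact ENNReal.half_le_self⟩
    refine ⟨hQne, hQfin, ?_⟩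
    intro C hC i
    rw [hQ] at hC
    obtain ⟨hCgen, hCs⟩ := hC
    obtain ⟨e, he, _, hsymm⟩ := moeb_spec (g i)
    have hpre : ∀ D : Set (OnePoint ℂ),
        moeb (↑(g i) : Matrix (Fin 2) (Fin 2) ℂ) ⁻¹' D = e.symm '' D := by
      intro D
      rw [← he, Equiv.image_eq_preimage_symm e.symm D, Equiv.symm_symm]
    have hgenpre : ∀ j : Λ, IsGenCircle
        (moeb (↑(g j) : Matrix (Fin 2) (Fin 2) ℂ) ⁻¹' C) := by
      intro j
      obtain ⟨e', he', _, hsymm'⟩ := moeb_spec (g j)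
      have : moeb (↑(g j) : Matrix (Fin 2) (Fin 2) ℂ) ⁻¹' C = e'.symm '' C := by
        rw [← he', Equiv.image_eq_preimage_symm e'.symm C, Equiv.symm_symm]
      rw [this]
      exact hsymm' C hCgen
    -- all preimages have measure ≤ s
    set x : Λ → ℝ≥0∞ := fun j => ν (moeb (↑(g j) : Matrix (Fin 2) (Fin 2) ℂ) ⁻¹' C) with hx
    have hxle : ∀ j, x j ≤ s := by
      intro j
      rw [hs]
      exact le_sSup ⟨_, hgenpre j, rfl⟩
    have hsum : s = ∑ j, ENNReal.ofReal (p j) * x j := by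
      rw [← hCs]
      exact hν C (measurableSet_genCircle hCgen)
    -- each x j equals s
    have hxeq : ∀ j, x j = s := by
      intro j
      by_contra hxj
      have hxlt : x j < s := (hxle j).lt_of_ne hxj
      have hxne : ∀ k, x k ≠ (⊤ : ℝ≥0∞) :=
        fun k => ((hxle k).trans_lt (hsle1.trans_lt ENNReal.one_lt_top)).ne
      have htermne : ∀ k : Λ, k ∈ Finset.univ → ENNReal.ofReal (p k) * x k ≠ (⊤ : ℝ≥0∞) :=
        fun k _ => ENNReal.mul_ne_top ENNReal.ofReal_ne_top (hxne k)
      have hreal : s.toReal = ∑ k, p k * (x k).toReal := by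
        rw [hsum, ENNReal.toReal_sum htermne]
        apply Finset.sum_congr rfl
        intro k _
        rw [ENNReal.toReal_mul, ENNReal.toReal_ofReal (hp k).le]
      have hlt : ∑ k, p k * (x k).toReal < ∑ k, p k * s.toReal := by
        apply Finset.sum_lt_sum
        · intro k _
          exact mul_le_mul_of_nonneg_left
            (ENNReal.toReal_le_toReal (hxne k) hsne |>.2 (hxle k)) (hp k).le
        · exact ⟨j, Finset.mem_univ j,
            mul_lt_mul_of_pos_left
              ((ENNReal.toReal_lt_toReal (hxne j) hsne).2 hxlt) (hp j)⟩
      rw [← Finset.sum_mul, hp1, one_mul] at hlt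
      rw [hreal] at hlt
      exact lt_irrefl _ hlt
    rw [hQ]
    exact ⟨hgenpre i, hxeq i⟩
  constructor
  · exact hmain
  · intro hno C hC
    by_contra hνC
    have hspos : 0 < s := by
      calc (0 : ℝ≥0∞) < ν C := pos_iff_ne_zero.2 hνC
      _ ≤ s := hs ▸ le_sSup ⟨C, hC, rfl⟩
    obtain ⟨hQne, hQfin, hback⟩ := hmain hspos
    apply hno
    refine ⟨Q, hQfin, hQne, fun D hD => (hQ ▸ hD).1, ?_⟩
    intro i D hD
    obtain ⟨e, he, _, _⟩ := moeb_spec (g i)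
    have hsurj : Function.Surjective (moeb (↑(g i) : Matrix (Fin 2) (Fin 2) ℂ)) :=
      he ▸ e.surjective
    have hmapsTo : Set.MapsTo
        (fun D : Set (OnePoint ℂ) => moeb (↑(g i) : Matrix (Fin 2) (Fin 2) ℂ) ⁻¹' D) Q Q :=
      fun D hD => hback D hD i
    have hinj : Set.InjOn
        (fun D : Set (OnePoint ℂ) => moeb (↑(g i) : Matrix (Fin 2) (Fin 2) ℂ) ⁻¹' D) Q := by
      intro D₁ _ D₂ _ hEq
      have himg := congrArg (fun S => moeb (↑(g i) : Matrix (Fin 2) (Fin 2) ℂ) '' S) hEq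
      simpa [Set.image_preimage_eq _ hsurj] using himg
    have hbij := (hQfin.injOn_iff_bijOn_of_mapsTo hmapsTo).1 hinj
    obtain ⟨D', hD', hD'eq⟩ := hbij.surjOn hD
    have : moeb (↑(g i) : Matrix (Fin 2) (Fin 2) ℂ) '' D = D' := by
      rw [← hD'eq, Set.image_preimage_eq _ hsurj]
    rw [this]
    exact hD'
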